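/- There do not exist two-qubit gates U_AB, V_AB ∈ K_AB and U_AC, V_AC ∈ K_AC such that U_AC · U_AB · V_AC · V_AB = F, where F is the Fredkin gate. -/

import Mathlib

open Matrix

/-- The three-qubit index type: basis states `|abc⟩` for qubits `A`, `B`, `C`. -/
abbrev Q3 : Type := Fin 2 × Fin 2 × Fin 2

noncomputable section

/-- Class `K_AB`: two-qubit gates acting on qubits `A` and `B` (i.e. of the form `U ⊗ I₂`). -/
def IsKAB (M : Matrix Q3 Q3 ℂ) : Prop :=
  ∃ U ∈ Matrix.unitaryGroup (Fin 2 × Fin 2) ℂ,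
    ∀ a b c a' b' c' : Fin 2,
      M (a, b, c) (a', b', c') = U (a, b) (a', b') * (if c = c' then 1 else 0)

/-- Class `K_BC`: two-qubit gates acting on qubits `B` and `C` (i.e. of the form `I₂ ⊗ U`). -/
def IsKBC (M : Matrix Q3 Q3 ℂ) : Prop :=
  ∃ U ∈ Matrix.unitaryGroup (Fin 2 × Fin 2) ℂ,
    ∀ a b c a' b' c' : Fin 2,
      M (a, b, c) (a', b', c') = (if a = a' then 1 else 0) * U (b, c) (b', c')

/-- Class `K_AC`: two-qubit gates acting on qubits `A` and `C`
(i.e. of the form `(I₂ ⊗ S)(U ⊗ I₂)(I₂ ⊗ S)`). -/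
def IsKAC (M : Matrix Q3 Q3 ℂ) : Prop :=
  ∃ U ∈ Matrix.unitaryGroup (Fin 2 × Fin 2) ℂ,
    ∀ a b c a' b' c' : Fin 2,
      M (a, b, c) (a', b', c') = U (a, c) (a', c') * (if b = b' then 1 else 0)

/-- A two-qubit gate on three qubits: an element of `K_AB ∪ K_AC ∪ K_BC`. -/
def IsTwoQubitGate (M : Matrix Q3 Q3 ℂ) : Prop := IsKAB M ∨ IsKAC M ∨ IsKBC M

/-- `M` can be written as a product of at most `k` two-qubit gates. -/
def ProdOfGates (k : ℕ) (M : Matrix Q3 Q3 ℂ) : Prop :=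
  ∃ L : List (Matrix Q3 Q3 ℂ), L.length ≤ k ∧ (∀ G ∈ L, IsTwoQubitGate G) ∧ L.prod = M

/-- The gate `V(θ₁,θ₂) = diag(1,1,1,1,1,1,e^{iθ₁},e^{iθ₂})`. -/
def Vgate (θ₁ θ₂ : ℝ) : Matrix Q3 Q3 ℂ :=
  Matrix.diagonal fun x =>
    if x = (1, 1, 0) then Complex.exp (θ₁ * Complex.I)
    else if x = (1, 1, 1) then Complex.exp (θ₂ * Complex.I) else 1

/-- The Fredkin gate: `F|0bc⟩ = |0bc⟩`, `F|1bc⟩ = |1cb⟩`. -/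
def Fredkin : Matrix Q3 Q3 ℂ :=
  Matrix.of fun x y => if x = (if y.1 = 1 then (y.1, y.2.2, y.2.1) else y) then 1 else 0

abbrev FKQ2 : Type := Fin 2 × Fin 2

/-- `h ⊗ I₂` as a matrix on `Fin 2 × Fin 2`, identity on the second factor. -/
def fkr (h : Matrix (Fin 2) (Fin 2) ℂ) : Matrix FKQ2 FKQ2 ℂ :=
  Matrix.of fun x y => h x.1 y.1 * (if x.2 = y.2 then 1 else 0)

lemma fkr_mul (h g : Matrix (Fin 2) (Fin 2) ℂ) : fkr h * fkr g = fkr (h * g) := by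
  ext ⟨a, b⟩ ⟨a', b'⟩
  simp only [fkr, Matrix.mul_apply, Matrix.of_apply, Fintype.sum_prod_type,
    Fin.sum_univ_two]
  fin_cases b <;> fin_cases b' <;> simp <;> ring

lemma fkr_conjT (h : Matrix (Fin 2) (Fin 2) ℂ) : (fkr h)ᴴ = fkr hᴴ := by
  ext ⟨a, b⟩ ⟨a', b'⟩
  simp [fkr, Matrix.conjTranspose_apply, eq_comm]
  by_cases hb : b = b' <;> simp [hb] <;> simp [eq_comm] 

lemma fkr_trace (h : Matrix (Fin 2) (Fin 2) ℂ) : trace (fkr h) = 2 * trace h := by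
  simp only [fkr, Matrix.trace, Matrix.diag, Fintype.sum_prod_type, Fin.sum_univ_two,
    Matrix.of_apply]
  simp
  ring

lemma fkr_one : fkr 1 = 1 := by
  ext ⟨a, b⟩ ⟨a', b'⟩
  simp only [fkr, Matrix.of_apply, Matrix.one_apply, Prod.ext_iff]
  by_cases h : a = a' <;> by_cases h2 : b = b' <;> simp [h, h2]

lemma fkr_smul (s : ℂ) (h : Matrix (Fin 2) (Fin 2) ℂ) : fkr (s • h) = s • fkr h := by
  ext ⟨a, b⟩ ⟨a', b'⟩
  simp [fkr]

lemma fkr_sub (h g : Matrix (Fin 2) (Fin 2) ℂ) : fkr (h - g) = fkr h - fkr g := by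
  ext ⟨a, b⟩ ⟨a', b'⟩
  simp [fkr]
  by_cases h2 : b = b' <;> simp [h2]

/-- Cayley–Hamilton for 2×2 complex matrices. -/
lemma fkCH2 (h : Matrix (Fin 2) (Fin 2) ℂ) :
    h * h = trace h • h - (((trace h) ^ 2 - trace (h * h)) / 2) • (1 : Matrix (Fin 2) (Fin 2) ℂ) := by
  ext i j
  fin_cases i <;> fin_cases j <;>
    simp [Matrix.mul_apply, Matrix.trace, Matrix.diag, Fin.sum_univ_two, Matrix.one_apply] <;>
    ring

lemma fk_star_mem {U : Matrix FKQ2 FKQ2 ℂ} (hU : U ∈ Matrix.unitaryGroup FKQ2 ℂ) :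
    Uᴴ ∈ Matrix.unitaryGroup FKQ2 ℂ := by
  rw [← Matrix.star_eq_conjTranspose]
  exact Unitary.star_mem hU

lemma fkUU' {U : Matrix FKQ2 FKQ2 ℂ} (hU : U ∈ Matrix.unitaryGroup FKQ2 ℂ) :
    U * Uᴴ = 1 := by
  rw [← Matrix.star_eq_conjTranspose]
  exact Matrix.mem_unitaryGroup_iff.mp hU

lemma fkUU {U : Matrix FKQ2 FKQ2 ℂ} (hU : U ∈ Matrix.unitaryGroup FKQ2 ℂ) :
    Uᴴ * U = 1 := by
  rw [← Matrix.star_eq_conjTranspose]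
  exact Matrix.mem_unitaryGroup_iff'.mp hU

/-- sandwiched product: `(U y V)(U z V)ᴴ = U (y zᴴ) Uᴴ`. -/
lemma fk_sand_right {U V A B : Matrix FKQ2 FKQ2 ℂ}
    (hV : V ∈ Matrix.unitaryGroup FKQ2 ℂ)
    {y z : Matrix (Fin 2) (Fin 2) ℂ}
    (hA : A = U * fkr y * V) (hB : B = U * fkr z * V) :
    A * Bᴴ = U * fkr (y * zᴴ) * Uᴴ := by
  subst hA hB
  have hVV : ∀ X : Matrix FKQ2 FKQ2 ℂ, V * (Vᴴ * X) = X := fun X => by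
    rw [← Matrix.mul_assoc, fkUU' hV, Matrix.one_mul]
  simp only [Matrix.conjTranspose_mul, fkr_conjT, Matrix.mul_assoc]
  rw [hVV, ← Matrix.mul_assoc (fkr y), fkr_mul]

/-- sandwiched product: `(U y V)ᴴ (U z V) = Vᴴ (yᴴ z) V`. -/
lemma fk_sand_left {U V A B : Matrix FKQ2 FKQ2 ℂ}
    (hU : U ∈ Matrix.unitaryGroup FKQ2 ℂ)
    {y z : Matrix (Fin 2) (Fin 2) ℂ}
    (hA : A = U * fkr y * V) (hB : B = U * fkr z * V) :
    Aᴴ * B = Vᴴ * fkr (yᴴ * z) * V := by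
  subst hA hB
  have hUU : ∀ X : Matrix FKQ2 FKQ2 ℂ, Uᴴ * (U * X) = X := fun X => by
    rw [← Matrix.mul_assoc, fkUU hU, Matrix.one_mul]
  simp only [Matrix.conjTranspose_mul, fkr_conjT, Matrix.mul_assoc]
  rw [hUU, ← Matrix.mul_assoc (fkr yᴴ), fkr_mul]

/-- The key quadratic identity satisfied by any matrix of the form `U (h ⊗ I) Uᴴ`. -/
lemma fkquad {U H : Matrix FKQ2 FKQ2 ℂ} (hU : U ∈ Matrix.unitaryGroup FKQ2 ℂ)
    {h : Matrix (Fin 2) (Fin 2) ℂ} (hH : H = U * fkr h * Uᴴ) :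
    H * H = (trace H / 2) • H - ((trace H) ^ 2 / 8 - trace (H * H) / 4) • 1 := by
  have h1 : Uᴴ * U = 1 := fkUU hU
  have h2 : U * Uᴴ = 1 := fkUU' hU
  have e1 : H * H = U * fkr (h * h) * Uᴴ := by
    rw [hH, ← fkr_mul]
    have hUU : ∀ X : Matrix FKQ2 FKQ2 ℂ, Uᴴ * (U * X) = X := fun X => by
      rw [← Matrix.mul_assoc, h1, Matrix.one_mul]
    simp only [Matrix.mul_assoc]
    rw [hUU, ← Matrix.mul_assoc (fkr h)]
  have tconj : ∀ M : Matrix FKQ2 FKQ2 ℂ, trace (U * M * Uᴴ) = trace M := by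
    intro M
    rw [Matrix.trace_mul_cycle, h1, Matrix.one_mul]
  have tH : trace H = 2 * trace h := by rw [hH, tconj, fkr_trace]
  have tH2 : trace (H * H) = 2 * trace (h * h) := by rw [e1, tconj, fkr_trace]
  have hs : trace H / 2 = trace h := by rw [tH]; ring
  have hp : (trace H) ^ 2 / 8 - trace (H * H) / 4 = ((trace h) ^ 2 - trace (h * h)) / 2 := by
    rw [tH, tH2]; ring
  rw [hs, hp, e1, hH]
  have hch : fkr (h * h) = trace h • fkr h - (((trace h) ^ 2 - trace (h * h)) / 2) • 1 := by
    nth_rewrite 1 [fkCH2 h]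
    rw [fkr_sub, fkr_smul, fkr_smul, fkr_one]
  rw [hch, Matrix.mul_sub, Matrix.sub_mul, Matrix.mul_smul, Matrix.smul_mul,
    Matrix.mul_smul, Matrix.smul_mul, Matrix.mul_one, h2]

lemma fk_msz {z : ℂ} (h : z * star z = 0) : z = 0 := by
  rw [Complex.star_def, Complex.mul_conj] at h
  exact Complex.normSq_eq_zero.mp (by exact_mod_cast h)

/-- The structural fact: if `K = U (y ⊗ I) V` with `U, V` unitary, and row `β` of the
`B`-factor of `K` is supported on the single column `(0, β)` with values `P`, and the
column `(0,β)` is supported on `B`-rows `β`, then either the Frobenius norm of `K` is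
concentrated on `P`, or `P = 0`. -/
lemma fkFact {U V K : Matrix FKQ2 FKQ2 ℂ}
    (hU : U ∈ Matrix.unitaryGroup FKQ2 ℂ) (hV : V ∈ Matrix.unitaryGroup FKQ2 ℂ)
    {y : Matrix (Fin 2) (Fin 2) ℂ} (hK : K = U * fkr y * V)
    (P : Fin 2 → ℂ) (β : Fin 2)
    (hrow : ∀ a m n, K (a, β) (m, n) = if m = 0 ∧ n = β then P a else 0)
    (hcol : ∀ α γ, γ ≠ β → K (α, γ) (0, β) = 0) :
    trace (K * Kᴴ) = 2 * (∑ a, P a * star (P a)) ∨ (∀ a, P a = 0) := by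
  have hH : K * Kᴴ = U * fkr (y * yᴴ) * Uᴴ := fk_sand_right hV hK hK
  have qE := fkquad hU hH
  set H := K * Kᴴ with hHdef
  have hrow' : ∀ (a : Fin 2) (w : FKQ2), K (a, β) w = if w = (0, β) then P a else 0 := by
    rintro a ⟨m, n⟩
    rw [hrow]
    simp only [Prod.mk.injEq]
  have hHrow : ∀ (a : Fin 2) (z : FKQ2), H (a, β) z = P a * star (K z (0, β)) := by
    intro a z
    rw [hHdef, Matrix.mul_apply]
    rw [Finset.sum_eq_single ((0 : Fin 2), β)]
    · rw [hrow' a (0, β), if_pos rfl, Matrix.conjTranspose_apply]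
    · intro w _ hw
      rw [hrow' a w, if_neg hw, zero_mul]
    · intro hmem; exact absurd (Finset.mem_univ _) hmem
  have hHcol : ∀ (z : FKQ2) (a : Fin 2), H z (a, β) = K z (0, β) * star (P a) := by
    intro z a
    rw [hHdef, Matrix.mul_apply]
    rw [Finset.sum_eq_single ((0 : Fin 2), β)]
    · rw [Matrix.conjTranspose_apply, hrow' a (0, β), if_pos rfl]
    · intro w _ hw
      rw [Matrix.conjTranspose_apply, hrow' a w, if_neg hw, star_zero, mul_zero]
    · intro hmem; exact absurd (Finset.mem_univ _) hmem
  set T0 : ℂ := ∑ a, P a * star (P a) with hT0def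
  have hT0 : ∑ z : FKQ2, K z (0, β) * star (K z (0, β)) = T0 := by
    rw [Fintype.sum_prod_type, hT0def]
    refine Finset.sum_congr rfl fun α _ => ?_
    rw [Finset.sum_eq_single β]
    · have : K (α, β) (0, β) = P α := by rw [hrow' α (0, β), if_pos rfl]
      rw [this]
    · intro γ _ hγ
      rw [hcol α γ hγ, zero_mul]
    · intro hmem; exact absurd (Finset.mem_univ _) hmem
  set s : ℂ := trace H / 2 with hsdef
  set p : ℂ := (trace H) ^ 2 / 8 - trace (H * H) / 4 with hpdef
  have main : ∀ a a' : Fin 2,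
      (s - T0) * (P a * star (P a')) = p * (if a = a' then 1 else 0) := by
    intro a a'
    have e1 : (H * H) (a, β) (a', β) = (P a * star (P a')) * T0 := by
      rw [Matrix.mul_apply]
      calc ∑ z, H (a, β) z * H z (a', β)
          = ∑ z, (P a * star (P a')) * (K z (0, β) * star (K z (0, β))) := by
            refine Finset.sum_congr rfl fun z _ => ?_
            rw [hHrow, hHcol]; ring
        _ = (P a * star (P a')) * ∑ z : FKQ2, K z (0, β) * star (K z (0, β)) := by
            rw [Finset.mul_sum]
        _ = (P a * star (P a')) * T0 := by rw [hT0]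
    have e2 : H (a, β) (a', β) = P a * star (P a') := by
      rw [hHrow a (a', β)]
      congr 1
      rw [hrow' a' (0, β), if_pos rfl]
    have e3 := congrFun (congrFun qE (a, β)) (a', β)
    rw [e1] at e3
    have e4 : (((trace H / 2) • H - ((trace H) ^ 2 / 8 - trace (H * H) / 4) • (1 : Matrix FKQ2 FKQ2 ℂ))) (a, β) (a', β)
        = s * (P a * star (P a')) - p * (if a = a' then 1 else 0) := by
      rw [Matrix.sub_apply, Matrix.smul_apply, Matrix.smul_apply, e2, Matrix.one_apply]
      simp only [smul_eq_mul, Prod.mk.injEq, and_true]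
      rfl
    rw [e4] at e3
    linear_combination -e3
  by_cases hT : trace (K * Kᴴ) = 2 * T0
  · exact Or.inl hT
  · right
    have hne : s - T0 ≠ 0 := by
      intro h
      apply hT
      have : s = T0 := by linear_combination h
      rw [hHdef] at hsdef
      rw [← this, hsdef]
      ring
    have h01 := main 0 1
    rw [if_neg (by decide : ¬ (0 : Fin 2) = 1), mul_zero] at h01
    have hP01 : P 0 * star (P 1) = 0 := by
      rcases mul_eq_zero.mp h01 with h | h
      · exact absurd h hne
      · exact h
    have h00 := main 0 0
    rw [if_pos rfl, mul_one] at h00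
    have h11 := main 1 1
    rw [if_pos rfl, mul_one] at h11
    have key : P 0 = 0 ∧ P 1 = 0 := by
      rcases mul_eq_zero.mp hP01 with h | h
      · refine ⟨h, ?_⟩
        rw [h, zero_mul, mul_zero] at h00
        have : (s - T0) * (P 1 * star (P 1)) = 0 := by rw [h11, ← h00]
        rcases mul_eq_zero.mp this with h' | h'
        · exact absurd h' hne
        · exact fk_msz h'
      · have h1 : P 1 = 0 := star_eq_zero.mp h
        refine ⟨?_, h1⟩
        rw [h1, zero_mul, mul_zero] at h11
        have : (s - T0) * (P 0 * star (P 0)) = 0 := by rw [h00, ← h11]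
        rcases mul_eq_zero.mp this with h' | h'
        · exact absurd h' hne
        · exact fk_msz h'
    intro a
    fin_cases a
    · exact key.1
    · exact key.2

lemma fk_two_msz {z w : ℂ} (h : star z * z + star w * w = 0) : z = 0 ∧ w = 0 := by
  rw [mul_comm _ z, mul_comm _ w] at h
  rw [show z * star z = ((Complex.normSq z : ℝ) : ℂ) from Complex.mul_conj z] at h
  rw [show w * star w = ((Complex.normSq w : ℝ) : ℂ) from Complex.mul_conj w] at h
  have h' : Complex.normSq z + Complex.normSq w = 0 := by exact_mod_cast h
  have h1 : Complex.normSq z = 0 := by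
    nlinarith [Complex.normSq_nonneg z, Complex.normSq_nonneg w]
  have h2 : Complex.normSq w = 0 := by
    nlinarith [Complex.normSq_nonneg z, Complex.normSq_nonneg w]
  exact ⟨Complex.normSq_eq_zero.mp h1, Complex.normSq_eq_zero.mp h2⟩

/-- The "rank-parity" killer: an operator of the form `Uᴴ (g ⊗ I) U` supported on a
single row cell must vanish. -/
lemma fkKiller {U G : Matrix FKQ2 FKQ2 ℂ} (hU : U ∈ Matrix.unitaryGroup FKQ2 ℂ)
    {g : Matrix (Fin 2) (Fin 2) ℂ} (hG : G = Uᴴ * fkr g * U) (κ μ : ℂ)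
    (hGe : ∀ x y : FKQ2, G x y =
      if x = ((0 : Fin 2), (0 : Fin 2)) ∧ y.1 = 1 then (if y.2 = 0 then κ else μ) else 0) :
    κ = 0 ∧ μ = 0 := by
  have hH' : Gᴴ * G = Uᴴ * fkr (gᴴ * g) * (Uᴴ)ᴴ := by
    rw [Matrix.conjTranspose_conjTranspose]
    exact fk_sand_left (fk_star_mem hU) hG hG
  have qE := fkquad (fk_star_mem hU) hH'
  have hGz : ∀ (z : FKQ2), z ≠ ((0 : Fin 2), (0 : Fin 2)) → ∀ x, G z x = 0 := by
    intro z hz x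
    rw [hGe]
    exact if_neg fun hc => hz hc.1
  have hHe : ∀ x y : FKQ2, (Gᴴ * G) x y =
      star (G ((0 : Fin 2), (0 : Fin 2)) x) * G ((0 : Fin 2), (0 : Fin 2)) y := by
    intro x y
    rw [Matrix.mul_apply]
    rw [Finset.sum_eq_single ((0 : Fin 2), (0 : Fin 2))]
    · rw [Matrix.conjTranspose_apply]
    · intro z _ hz
      rw [Matrix.conjTranspose_apply, hGz z hz, star_zero, zero_mul]
    · intro hmem; exact absurd (Finset.mem_univ _) hmem
  have tH : trace (Gᴴ * G) = star κ * κ + star μ * μ := by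
    simp only [Matrix.trace, Matrix.diag, Fintype.sum_prod_type, Fin.sum_univ_two, hHe, hGe]
    simp
  have tHH : trace ((Gᴴ * G) * (Gᴴ * G)) = (star κ * κ + star μ * μ) ^ 2 := by
    simp only [Matrix.trace, Matrix.diag, Matrix.mul_apply, Fintype.sum_prod_type,
      Fin.sum_univ_two, hHe, hGe]
    simp
    ring
  have e3 := congrFun (congrFun qE ((0 : Fin 2), (0 : Fin 2))) ((0 : Fin 2), (0 : Fin 2))
  have lhs0 : ((Gᴴ * G) * (Gᴴ * G)) ((0 : Fin 2), (0 : Fin 2)) ((0 : Fin 2), (0 : Fin 2)) = 0 := by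
    rw [Matrix.mul_apply]
    refine Finset.sum_eq_zero fun z _ => ?_
    rw [hHe]
    have : G ((0 : Fin 2), (0 : Fin 2)) ((0 : Fin 2), (0 : Fin 2)) = 0 := by
      rw [hGe]; simp
    rw [this, star_zero, zero_mul, zero_mul]
  have ediag : (Gᴴ * G) ((0 : Fin 2), (0 : Fin 2)) ((0 : Fin 2), (0 : Fin 2)) = 0 := by
    rw [hHe]
    have : G ((0 : Fin 2), (0 : Fin 2)) ((0 : Fin 2), (0 : Fin 2)) = 0 := by
      rw [hGe]; simp
    rw [this, star_zero, zero_mul]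
  rw [lhs0] at e3
  have e4 : (0 : ℂ) = - ((trace (Gᴴ * G)) ^ 2 / 8 - trace ((Gᴴ * G) * (Gᴴ * G)) / 4) := by
    calc (0 : ℂ) = ((trace (Gᴴ * G) / 2) • (Gᴴ * G) -
        ((trace (Gᴴ * G)) ^ 2 / 8 - trace ((Gᴴ * G) * (Gᴴ * G)) / 4) • (1 : Matrix FKQ2 FKQ2 ℂ))
          ((0 : Fin 2), (0 : Fin 2)) ((0 : Fin 2), (0 : Fin 2)) := e3
      _ = _ := by
        rw [Matrix.sub_apply, Matrix.smul_apply, Matrix.smul_apply, ediag, Matrix.one_apply_eq]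
        simp
  rw [tH, tHH] at e4
  have : (star κ * κ + star μ * μ) ^ 2 = 0 := by linear_combination -8 * e4
  exact fk_two_msz (by
    have := pow_eq_zero_iff (n := 2) (by norm_num) |>.mp this
    exact this)

lemma fk_four_msz {z1 z2 z3 z4 : ℂ}
    (h : star z1 * z1 + star z2 * z2 + star z3 * z3 + star z4 * z4 = 0) :
    z1 = 0 ∧ z2 = 0 ∧ z3 = 0 ∧ z4 = 0 := by
  have e : ∀ z : ℂ, star z * z = ((Complex.normSq z : ℝ) : ℂ) := fun z => by
    rw [mul_comm]; exact Complex.mul_conj z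
  rw [e z1, e z2, e z3, e z4] at h
  have h' : Complex.normSq z1 + Complex.normSq z2 + Complex.normSq z3 + Complex.normSq z4 = 0 := by
    exact_mod_cast h
  have n1 := Complex.normSq_nonneg z1
  have n2 := Complex.normSq_nonneg z2
  have n3 := Complex.normSq_nonneg z3
  have n4 := Complex.normSq_nonneg z4
  refine ⟨Complex.normSq_eq_zero.mp (by linarith), Complex.normSq_eq_zero.mp (by linarith),
    Complex.normSq_eq_zero.mp (by linarith), Complex.normSq_eq_zero.mp (by linarith)⟩

lemma fk_traceKK (M : Matrix FKQ2 FKQ2 ℂ) :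
    trace (M * Mᴴ) = ∑ x : FKQ2, ∑ y : FKQ2, M x y * star (M x y) := by
  simp [Matrix.trace, Matrix.diag, Matrix.mul_apply, Matrix.conjTranspose_apply]

lemma fkW1c {W : Matrix FKQ2 FKQ2 ℂ} (hWm : W ∈ Matrix.unitaryGroup FKQ2 ℂ) :
    ∀ p q : FKQ2, (∑ z : FKQ2, star (W z p) * W z q) = if p = q then 1 else 0 := by
  intro p q
  have h : Wᴴ * W = 1 := fkUU hWm
  have := congrFun (congrFun h p) q
  simpa [Matrix.mul_apply, Matrix.conjTranspose_apply, Matrix.one_apply] using this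

lemma fkAC_unitary {M : Matrix Q3 Q3 ℂ} {W : Matrix FKQ2 FKQ2 ℂ}
    (hWm : W ∈ Matrix.unitaryGroup FKQ2 ℂ)
    (hM : ∀ a b c a' b' c' : Fin 2,
      M (a, b, c) (a', b', c') = W (a, c) (a', c') * (if b = b' then 1 else 0)) :
    Mᴴ * M = 1 := by
  have hc := fkW1c hWm
  ext ⟨a, b, c⟩ ⟨a', b', c'⟩
  rw [Matrix.mul_apply]
  have hc' := hc (a, c) (a', c')
  rw [Fintype.sum_prod_type] at hc'
  simp only [Fin.sum_univ_two] at hc'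
  fin_cases b <;> fin_cases b' <;>
    · simp only [Fintype.sum_prod_type, Fin.sum_univ_two, Matrix.conjTranspose_apply, hM,
        Matrix.one_apply, Prod.mk.injEq]
      simp
      all_goals (simp at hc' ⊢; linear_combination hc')

/-- The `(c,c')` block (over the `C` qubit) of `UACᴴ * Fredkin`, as a matrix on `A ⊗ B`. -/
def fkK (W : Matrix FKQ2 FKQ2 ℂ) (c c' : Fin 2) : Matrix FKQ2 FKQ2 ℂ :=
  Matrix.of fun x y =>
    if y.1 = 0 then (if x.2 = y.2 then star (W (0, c') (x.1, c)) else 0)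
    else (if x.2 = c' then star (W (1, y.2) (x.1, c)) else 0)

/-- The `(c,c')` block (over the `C` qubit) of `VAC`, as a matrix on `A`. -/
def fkY (W : Matrix FKQ2 FKQ2 ℂ) (c c' : Fin 2) : Matrix (Fin 2) (Fin 2) ℂ :=
  Matrix.of fun a a' => W (a, c) (a', c')

lemma fkL2 {UAC : Matrix Q3 Q3 ℂ} {W : Matrix FKQ2 FKQ2 ℂ}
    (hM : ∀ a b c a' b' c' : Fin 2,
      UAC (a, b, c) (a', b', c') = W (a, c) (a', c') * (if b = b' then 1 else 0)) :
    ∀ a b c a' b' c' : Fin 2,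
      (UACᴴ * Fredkin) (a, b, c) (a', b', c') = fkK W c c' (a, b) (a', b') := by
  intro a b c a' b' c'
  rw [Matrix.mul_apply]
  have hF : ∀ z : Q3, Fredkin z (a', b', c') =
      if z = (if a' = 1 then (a', c', b') else (a', b', c')) then (1 : ℂ) else 0 := fun z => rfl
  calc (∑ z, (UACᴴ) (a, b, c) z * Fredkin z (a', b', c'))
      = ∑ z, if z = (if a' = 1 then (a', c', b') else (a', b', c'))
          then (UACᴴ) (a, b, c) z else 0 := by
        refine Finset.sum_congr rfl fun z _ => ?_
        rw [hF z, mul_ite, mul_one, mul_zero]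
    _ = (UACᴴ) (a, b, c) (if a' = 1 then (a', c', b') else (a', b', c')) := by
        rw [Finset.sum_ite_eq']
        simp
    _ = fkK W c c' (a, b) (a', b') := by
        rw [Matrix.conjTranspose_apply]
        fin_cases a' <;> fin_cases b <;> fin_cases b' <;>
          simp [hM, fkK, star_mul', apply_ite (star : ℂ → ℂ), eq_comm]

lemma fkL1 {UAB VAC VAB : Matrix Q3 Q3 ℂ} {U1 W2 U2 : Matrix FKQ2 FKQ2 ℂ}
    (hU1e : ∀ a b c a' b' c' : Fin 2,
      UAB (a, b, c) (a', b', c') = U1 (a, b) (a', b') * (if c = c' then 1 else 0))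
    (hW2e : ∀ a b c a' b' c' : Fin 2,
      VAC (a, b, c) (a', b', c') = W2 (a, c) (a', c') * (if b = b' then 1 else 0))
    (hU2e : ∀ a b c a' b' c' : Fin 2,
      VAB (a, b, c) (a', b', c') = U2 (a, b) (a', b') * (if c = c' then 1 else 0)) :
    ∀ a b c a' b' c' : Fin 2,
      (UAB * (VAC * VAB)) (a, b, c) (a', b', c')
        = (U1 * fkr (fkY W2 c c') * U2) (a, b) (a', b') := by
  intro a b c a' b' c'
  fin_cases c <;> fin_cases c' <;>
    · simp only [Matrix.mul_apply, Fintype.sum_prod_type, Fin.sum_univ_two, hU1e, hW2e, hU2e,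
        fkr, fkY, Matrix.of_apply]
      simp
      ring

/-- Instantiation of `fkFact` to the blocks `fkK W1 c 0`. -/
lemma fkFactK0 {U1 U2 W1 : Matrix FKQ2 FKQ2 ℂ} {Y : Matrix (Fin 2) (Fin 2) ℂ}
    (hU1 : U1 ∈ Matrix.unitaryGroup FKQ2 ℂ) (hU2 : U2 ∈ Matrix.unitaryGroup FKQ2 ℂ)
    (c : Fin 2) (hK : fkK W1 c 0 = U1 * fkr Y * U2) :
    (∀ a, W1 (1, 0) (a, c) = 0 ∧ W1 (1, 1) (a, c) = 0) ∨ (∀ a, W1 (0, 0) (a, c) = 0) := by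
  have hrow : ∀ a m n : Fin 2, fkK W1 c 0 (a, 1) (m, n) =
      if m = 0 ∧ n = 1 then star (W1 (0, 0) (a, c)) else 0 := by
    intro a m n
    fin_cases m <;> fin_cases n <;> simp [fkK]
  have hcol : ∀ α γ : Fin 2, γ ≠ 1 → fkK W1 c 0 (α, γ) ((0 : Fin 2), (1 : Fin 2)) = 0 := by
    intro α γ hγ
    fin_cases γ
    · simp [fkK]
    · exact absurd rfl hγ
  rcases fkFact hU1 hU2 hK (fun a => star (W1 (0, 0) (a, c))) 1 hrow hcol with h | h
  · left
    have ht : trace (fkK W1 c 0 * (fkK W1 c 0)ᴴ)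
        - 2 * (∑ a : Fin 2, star (W1 (0, 0) (a, c)) * star (star (W1 (0, 0) (a, c))))
        = star (W1 (1, 0) (0, c)) * W1 (1, 0) (0, c) + star (W1 (1, 0) (1, c)) * W1 (1, 0) (1, c)
          + star (W1 (1, 1) (0, c)) * W1 (1, 1) (0, c)
          + star (W1 (1, 1) (1, c)) * W1 (1, 1) (1, c) := by
      rw [fk_traceKK]
      simp only [Fintype.sum_prod_type, Fin.sum_univ_two, fkK, Matrix.of_apply]
      simp [star_star]
      ring
    rw [h] at ht
    have h4 := fk_four_msz (z1 := W1 (1, 0) (0, c)) (z2 := W1 (1, 0) (1, c))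
      (z3 := W1 (1, 1) (0, c)) (z4 := W1 (1, 1) (1, c)) (by linear_combination -ht)
    intro a
    fin_cases a
    · exact ⟨h4.1, h4.2.2.1⟩
    · exact ⟨h4.2.1, h4.2.2.2⟩
  · right
    intro a
    have := h a
    simpa using this

/-- The 2×2 orthogonality endgame: a vector orthogonal to an orthonormal basis vanishes. -/
lemma fkEndgame (x0 x1 C0 C1 D0 D1 : ℂ)
    (hκ : x0 * star C0 + x1 * star C1 = 0)
    (hμ : x0 * star D0 + x1 * star D1 = 0)
    (hnC : C0 * star C0 + C1 * star C1 = 1)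
    (hnD : D0 * star D0 + D1 * star D1 = 1)
    (hCD : C0 * star D0 + C1 * star D1 = 0) :
    x0 = 0 ∧ x1 = 0 := by
  have hsd : star (C0 * D1 - C1 * D0) = star C0 * star D1 - star C1 * star D0 := by
    simp [star_sub, star_mul']
  have hCD' : star C0 * D0 + star C1 * D1 = 0 := by
    have := congrArg star hCD
    simpa [star_add, star_mul'] using this
  have h1 : x0 * star (C0 * D1 - C1 * D0) = 0 := by
    rw [hsd]; linear_combination star D1 * hκ - star C1 * hμ
  have h2 : x1 * star (C0 * D1 - C1 * D0) = 0 := by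
    rw [hsd]; linear_combination star C0 * hμ - star D0 * hκ
  have hdd : (C0 * D1 - C1 * D0) * star (C0 * D1 - C1 * D0) = 1 := by
    rw [hsd]
    linear_combination (D0 * star D0 + D1 * star D1) * hnC + hnD
      - (star C0 * D0 + star C1 * D1) * hCD
  constructor
  · calc x0 = x0 * ((C0 * D1 - C1 * D0) * star (C0 * D1 - C1 * D0)) := by rw [hdd]; ring
      _ = (x0 * star (C0 * D1 - C1 * D0)) * (C0 * D1 - C1 * D0) := by ring
      _ = 0 := by rw [h1, zero_mul]
  · calc x1 = x1 * ((C0 * D1 - C1 * D0) * star (C0 * D1 - C1 * D0)) := by rw [hdd]; ring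
      _ = (x1 * star (C0 * D1 - C1 * D0)) * (C0 * D1 - C1 * D0) := by ring
      _ = 0 := by rw [h2, zero_mul]

/-- There are no two-qubit gates `U_AB, V_AB ∈ K_AB` and `U_AC, V_AC ∈ K_AC` such that
`U_AC · U_AB · V_AC · V_AB = F`, the Fredkin gate. -/
theorem fredkin_no_ABAC_circuit :
    ¬ ∃ UAB VAB UAC VAC : Matrix Q3 Q3 ℂ,
        IsKAB UAB ∧ IsKAB VAB ∧ IsKAC UAC ∧ IsKAC VAC ∧
        UAC * UAB * VAC * VAB = Fredkin := by
  rintro ⟨UAB, VAB, UAC, VAC, ⟨U1, hU1m, hU1e⟩, ⟨U2, hU2m, hU2e⟩,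
    ⟨W1, hW1m, hW1e⟩, ⟨W2, hW2m, hW2e⟩, heq⟩
  -- row orthonormality relations for `W1`
  have hWW' : W1 * W1ᴴ = 1 := fkUU' hW1m
  have hrow' : ∀ p q : FKQ2,
      W1 p (0, 0) * star (W1 q (0, 0)) + W1 p (0, 1) * star (W1 q (0, 1)) +
      (W1 p (1, 0) * star (W1 q (1, 0)) + W1 p (1, 1) * star (W1 q (1, 1))) =
      if p = q then 1 else 0 := by
    intro p q
    have h := congrFun (congrFun hWW' p) q
    rw [Matrix.mul_apply, Fintype.sum_prod_type] at h
    simpa [Fin.sum_univ_two, Matrix.conjTranspose_apply, Matrix.one_apply] using h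
  -- the master block identities
  have hE8 : UAB * (VAC * VAB) = UACᴴ * Fredkin := by
    have h1 : UACᴴ * UAC = 1 := fkAC_unitary hW1m hW1e
    calc UAB * (VAC * VAB) = (UACᴴ * UAC) * (UAB * (VAC * VAB)) := by rw [h1, Matrix.one_mul]
      _ = UACᴴ * (UAC * UAB * VAC * VAB) := by simp only [Matrix.mul_assoc]
      _ = UACᴴ * Fredkin := by rw [← heq]
  have hKmat : ∀ c : Fin 2, fkK W1 c 0 = U1 * fkr (fkY W2 c 0) * U2 := by
    intro c
    ext ⟨a, b⟩ ⟨a', b'⟩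
    calc fkK W1 c 0 (a, b) (a', b')
        = (UACᴴ * Fredkin) (a, b, c) (a', b', 0) := (fkL2 hW1e a b c a' b' 0).symm
      _ = (UAB * (VAC * VAB)) (a, b, c) (a', b', 0) := by rw [hE8]
      _ = (U1 * fkr (fkY W2 c 0) * U2) (a, b) (a', b') := fkL1 hU1e hW2e hU2e a b c a' b' 0
  have F1 := fkFactK0 hU1m hU2m 0 (hKmat 0)
  have F3 := fkFactK0 hU1m hU2m 1 (hKmat 1)
  by_cases hA : ∀ a : Fin 2, W1 (1, 0) (a, 0) = 0 ∧ W1 (1, 1) (a, 0) = 0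
  · -- Case A : the `|1⟩⟨·|`-blocks of the first column of `W1` vanish
    have hnC : W1 (1, 0) (0, 1) * star (W1 (1, 0) (0, 1))
        + W1 (1, 0) (1, 1) * star (W1 (1, 0) (1, 1)) = 1 := by
      have h := hrow' (1, 0) (1, 0)
      rw [(hA 0).1, (hA 1).1] at h
      simpa using h
    have hnD : W1 (1, 1) (0, 1) * star (W1 (1, 1) (0, 1))
        + W1 (1, 1) (1, 1) * star (W1 (1, 1) (1, 1)) = 1 := by
      have h := hrow' (1, 1) (1, 1)
      rw [(hA 0).2, (hA 1).2] at h
      simpa using h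
    have hCD : W1 (1, 0) (0, 1) * star (W1 (1, 1) (0, 1))
        + W1 (1, 0) (1, 1) * star (W1 (1, 1) (1, 1)) = 0 := by
      have h := hrow' (1, 0) (1, 1)
      rw [(hA 0).1, (hA 1).1] at h
      simpa using h
    have hc0 : ∀ a : Fin 2, W1 (0, 0) (a, 1) = 0 := by
      rcases F3 with h3 | h3
      · exfalso
        rw [(h3 0).1, (h3 1).1] at hnC
        simp at hnC
      · exact h3
    have z1 : W1 (1, 0) 0 = 0 := (hA 0).1
    have z2 : W1 (1, 0) (1, 0) = 0 := (hA 1).1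
    have z3 : W1 1 0 = 0 := (hA 0).2
    have z4 : W1 1 (1, 0) = 0 := (hA 1).2
    have z5 : W1 0 (0, 1) = 0 := hc0 0
    have z6 : W1 0 1 = 0 := hc0 1
    have hGsand := fk_sand_left hU1m (hKmat 0) (hKmat 1)
    have hGe : ∀ x y : FKQ2, ((fkK W1 0 0)ᴴ * fkK W1 1 0) x y =
        if x = ((0 : Fin 2), (0 : Fin 2)) ∧ y.1 = 1 then
          (if y.2 = 0 then
            W1 (0, 0) (0, 0) * star (W1 (1, 0) (0, 1)) + W1 (0, 0) (1, 0) * star (W1 (1, 0) (1, 1))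
          else
            W1 (0, 0) (0, 0) * star (W1 (1, 1) (0, 1)) + W1 (0, 0) (1, 0) * star (W1 (1, 1) (1, 1)))
        else 0 := by
      intro x y
      obtain ⟨x1, x2⟩ := x; obtain ⟨y1, y2⟩ := y
      rw [Matrix.mul_apply]
      fin_cases x1 <;> fin_cases x2 <;> fin_cases y1 <;> fin_cases y2 <;>
        · simp only [Fintype.sum_prod_type, Fin.sum_univ_two, Matrix.conjTranspose_apply,
            fkK, Matrix.of_apply]
          simp [(hA 0).1, (hA 1).1, (hA 0).2, (hA 1).2, hc0 0, hc0 1, z1, z2, z3, z4, z5, z6]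
          try ring
    obtain ⟨hκ, hμ⟩ := fkKiller hU2m hGsand _ _ hGe
    obtain ⟨hx0, hx1⟩ := fkEndgame _ _ _ _ _ _ hκ hμ hnC hnD hCD
    have hfin := hrow' (0, 0) (0, 0)
    rw [hx0, hx1, hc0 0, hc0 1] at hfin
    simp at hfin
  · -- Case B
    have ha0 : ∀ a : Fin 2, W1 (0, 0) (a, 0) = 0 := by
      rcases F1 with h | h
      · exact absurd h hA
      · exact h
    have hnE : W1 (0, 0) (0, 1) * star (W1 (0, 0) (0, 1))
        + W1 (0, 0) (1, 1) * star (W1 (0, 0) (1, 1)) = 1 := by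
      have h := hrow' (0, 0) (0, 0)
      rw [ha0 0, ha0 1] at h
      simpa using h
    have hc1d1 : ∀ a : Fin 2, W1 (1, 0) (a, 1) = 0 ∧ W1 (1, 1) (a, 1) = 0 := by
      rcases F3 with h3 | h3
      · exact h3
      · exfalso
        rw [h3 0, h3 1] at hnE
        simp at hnE
    have hnA : W1 (1, 0) (0, 0) * star (W1 (1, 0) (0, 0))
        + W1 (1, 0) (1, 0) * star (W1 (1, 0) (1, 0)) = 1 := by
      have h := hrow' (1, 0) (1, 0)
      rw [(hc1d1 0).1, (hc1d1 1).1] at h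
      simpa using h
    have hnB : W1 (1, 1) (0, 0) * star (W1 (1, 1) (0, 0))
        + W1 (1, 1) (1, 0) * star (W1 (1, 1) (1, 0)) = 1 := by
      have h := hrow' (1, 1) (1, 1)
      rw [(hc1d1 0).2, (hc1d1 1).2] at h
      simpa using h
    have hAB : W1 (1, 0) (0, 0) * star (W1 (1, 1) (0, 0))
        + W1 (1, 0) (1, 0) * star (W1 (1, 1) (1, 0)) = 0 := by
      have h := hrow' (1, 0) (1, 1)
      rw [(hc1d1 0).1, (hc1d1 1).1] at h
      simpa using h
    have z1 : W1 0 0 = 0 := ha0 0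
    have z2 : W1 0 (1, 0) = 0 := ha0 1
    have z3 : W1 (1, 0) (0, 1) = 0 := (hc1d1 0).1
    have z4 : W1 (1, 0) 1 = 0 := (hc1d1 1).1
    have z5 : W1 1 (0, 1) = 0 := (hc1d1 0).2
    have z6 : W1 1 1 = 0 := (hc1d1 1).2
    have hGsand := fk_sand_left hU1m (hKmat 1) (hKmat 0)
    have hGe : ∀ x y : FKQ2, ((fkK W1 1 0)ᴴ * fkK W1 0 0) x y =
        if x = ((0 : Fin 2), (0 : Fin 2)) ∧ y.1 = 1 then
          (if y.2 = 0 then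
            W1 (0, 0) (0, 1) * star (W1 (1, 0) (0, 0)) + W1 (0, 0) (1, 1) * star (W1 (1, 0) (1, 0))
          else
            W1 (0, 0) (0, 1) * star (W1 (1, 1) (0, 0)) + W1 (0, 0) (1, 1) * star (W1 (1, 1) (1, 0)))
        else 0 := by
      intro x y
      obtain ⟨x1, x2⟩ := x; obtain ⟨y1, y2⟩ := y
      rw [Matrix.mul_apply]
      fin_cases x1 <;> fin_cases x2 <;> fin_cases y1 <;> fin_cases y2 <;>
        · simp only [Fintype.sum_prod_type, Fin.sum_univ_two, Matrix.conjTranspose_apply,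
            fkK, Matrix.of_apply]
          simp [ha0 0, ha0 1, (hc1d1 0).1, (hc1d1 1).1, (hc1d1 0).2, (hc1d1 1).2,
            z1, z2, z3, z4, z5, z6]
          try ring
    obtain ⟨hκ, hμ⟩ := fkKiller hU2m hGsand _ _ hGe
    obtain ⟨hx0, hx1⟩ := fkEndgame _ _ _ _ _ _ hκ hμ hnA hnB hAB
    rw [hx0, hx1] at hnE
    simp at hnE

end
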